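/- arXiv:1208.4242 — 3 statements merged into one kernel-verified Lean document; each statement's English description precedes it below -/
import Mathlib

section
/- Let q = 11^r with r an odd positive integer, and let F be a finite field with q elements. For every γ ∈ F, the number of triples (x,y,t) ∈ F³ satisfying y² = x³ + γ·x + t¹¹ − t is exactly q². -/
open Finset

/-- Let `q = 11^r` with `r` an odd positive integer, and let `F` be a finite field with
`q` elements. For every `γ ∈ F`, the number of triples `(x, y, t) ∈ F³` satisfying
`y² = x³ + γ·x + t¹¹ − t` is exactly `q²`. -/
theorem stmt0 (r : ℕ) (hr : Odd r) (F : Type*) [Field F] [Fintype F]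
    (hF : Fintype.card F = 11 ^ r) (γ : F) :
    Nat.card {p : F × F × F // p.2.1 ^ 2 = p.1 ^ 3 + γ * p.1 + p.2.2 ^ 11 - p.2.2}
      = (11 ^ r) ^ 2 := by
  classical
  set f : F → F → F := fun x t => x ^ 3 + γ * x + t ^ 11 - t with hf
  have hmod2 : Fintype.card F % 2 = 1 := by
    rw [hF, Nat.pow_mod]; norm_num
  have hchar : ringChar F ≠ 2 := fun h => by
    have := FiniteField.even_card_of_char_two h; omega
  have hmod4 : Fintype.card F % 4 = 3 := by
    obtain ⟨k, rfl⟩ := hr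
    rw [hF, Nat.pow_mod]
    norm_num
    rw [pow_succ, pow_mul, Nat.mul_mod, Nat.pow_mod]
    norm_num
  have hneg1 : quadraticChar F (-1) = -1 :=
    quadraticChar_neg_one_iff_not_isSquare.mpr
      (by rw [FiniteField.isSquare_neg_one_iff]; omega)
  -- card of square-root fibers
  have hfib : ∀ a : F, (Fintype.card {y : F // y ^ 2 = a} : ℤ) = quadraticChar F a + 1 := by
    intro a
    rw [← quadraticChar_card_sqrts hchar a, Set.toFinset_card]
    rfl
  -- equivalence with a sigma type
  have e : {p : F × F × F // p.2.1 ^ 2 = p.1 ^ 3 + γ * p.1 + p.2.2 ^ 11 - p.2.2}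
      ≃ Σ x : F, Σ t : F, {y : F // y ^ 2 = f x t} :=
    { toFun := fun p => ⟨p.1.1, p.1.2.2, ⟨p.1.2.1, p.2⟩⟩
      invFun := fun s => ⟨(s.1, s.2.2.1, s.2.1), s.2.2.2⟩
      left_inv := fun ⟨⟨x, y, t⟩, h⟩ => rfl
      right_inv := fun ⟨x, t, y, h⟩ => rfl }
  have hcard : Nat.card {p : F × F × F // p.2.1 ^ 2 = p.1 ^ 3 + γ * p.1 + p.2.2 ^ 11 - p.2.2}
      = ∑ x : F, ∑ t : F, Fintype.card {y : F // y ^ 2 = f x t} := by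
    rw [Nat.card_eq_fintype_card, Fintype.card_congr e, Fintype.card_sigma]
    simp [Fintype.card_sigma]
  -- the character sum vanishes
  set S : ℤ := ∑ x : F, ∑ t : F, quadraticChar F (f x t) with hS
  have hkey : ∀ x t : F, quadraticChar F (f (-x) (-t)) = - quadraticChar F (f x t) := by
    intro x t
    have h1 : f (-x) (-t) = -1 * f x t := by simp only [hf]; ring
    rw [h1, map_mul, hneg1]; ring
  have hS2 : S = -S := by
    have h1 : (∑ x : F, ∑ t : F, quadraticChar F (f (-x) (-t)))
        = ∑ x : F, ∑ t : F, quadraticChar F (f x t) :=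
      Fintype.sum_equiv (Equiv.neg F) _ _ (fun x =>
        Fintype.sum_equiv (Equiv.neg F) _ _ (fun t => rfl))
    calc S = ∑ x : F, ∑ t : F, quadraticChar F (f (-x) (-t)) := h1.symm
      _ = ∑ x : F, ∑ t : F, - quadraticChar F (f x t) := by
          simp_rw [hkey]
      _ = -S := by rw [hS]; simp [Finset.sum_neg_distrib]
  have hS0 : S = 0 := by linarith
  -- put it together over ℤ
  have hZ : (Nat.card {p : F × F × F // p.2.1 ^ 2 = p.1 ^ 3 + γ * p.1 + p.2.2 ^ 11 - p.2.2} : ℤ)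
      = ((11 ^ r) ^ 2 : ℕ) := by
    rw [hcard]
    push_cast
    have : (∑ x : F, ∑ t : F, (Fintype.card {y : F // y ^ 2 = f x t} : ℤ))
        = ∑ x : F, ∑ t : F, (quadraticChar F (f x t) + 1) := by
      simp_rw [hfib]
    rw [this]
    simp only [Finset.sum_add_distrib]
    rw [← hS, hS0]
    simp [Finset.card_univ, hF]
    ring
  exact_mod_cast hZ
end

section
/- Let R be a commutative ring and let u, v, w ∈ R satisfy u¹¹ + v¹¹ + w¹¹ + 1 = 0. Set x = −u¹¹·v¹¹, y = −u²²·v¹¹, t = −w·u³·v². Then y² + x·y = x³ + t¹¹. -/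
/-- Let `R` be a commutative ring and let `u, v, w ∈ R` satisfy
`u¹¹ + v¹¹ + w¹¹ + 1 = 0`. Set `x = −u¹¹·v¹¹`, `y = −u²²·v¹¹`, `t = −w·u³·v²`.
Then `y² + x·y = x³ + t¹¹`. -/
theorem stmt13 (R : Type*) [CommRing R] (u v w : R) (h : u ^ 11 + v ^ 11 + w ^ 11 + 1 = 0)
    (x y t : R) (hx : x = -(u ^ 11 * v ^ 11)) (hy : y = -(u ^ 22 * v ^ 11))
    (ht : t = -(w * u ^ 3 * v ^ 2)) :
    y ^ 2 + x * y = x ^ 3 + t ^ 11 := by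
  have hw : w ^ 11 = -(u ^ 11 + v ^ 11 + 1) := by linear_combination h
  subst hx hy ht
  ring_nf
  linear_combination (u ^ 33 * v ^ 22) * hw
end

section
/- The polynomial P₁(T) = T²⁰ + T¹⁹ + 2T¹⁸ + T¹⁷ + T¹⁶ + 2T¹⁵ + 3T¹⁴ + 5T¹³ + 4T¹² + 3T¹¹ + (23/11)·T¹⁰ + 3T⁹ + 4T⁸ + 5T⁷ + 3T⁶ + 2T⁵ + T⁴ + T³ + 2T² + T + 1 ∈ ℚ[T] is irreducible over ℚ, and no complex root of unity is a root of P₁ (i.e. if z ∈ ℂ satisfies zⁿ = 1 for some n ≥ 1, then P₁(z) ≠ 0). -/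
open Polynomial

instance : Fact (Nat.Prime 11) := ⟨by norm_num⟩
instance : Fact (Nat.Prime 43) := ⟨by norm_num⟩

/-- The normalized characteristic polynomial of Frobenius for `X_ε`, `ε` a nonzero
square mod 11. -/
noncomputable def P₁ : ℚ[X] :=
  X ^ 20 + X ^ 19 + 2 * X ^ 18 + X ^ 17 + X ^ 16 + 2 * X ^ 15 + 3 * X ^ 14 + 5 * X ^ 13 +
    4 * X ^ 12 + 3 * X ^ 11 + C (23 / 11 : ℚ) * X ^ 10 + 3 * X ^ 9 + 4 * X ^ 8 + 5 * X ^ 7 +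
    3 * X ^ 6 + 2 * X ^ 5 + X ^ 4 + X ^ 3 + 2 * X ^ 2 + X + 1

/- ### Integer model of `11 * P₁` and mod-43 division certificates -/

noncomputable def Qz : ℤ[X] :=
  C 11 * X ^ 20 + C 11 * X ^ 19 + C 22 * X ^ 18 + C 11 * X ^ 17 + C 11 * X ^ 16 + C 22 * X ^ 15 +
    C 33 * X ^ 14 + C 55 * X ^ 13 + C 44 * X ^ 12 + C 33 * X ^ 11 + C 23 * X ^ 10 + C 33 * X ^ 9 +
    C 44 * X ^ 8 + C 55 * X ^ 7 + C 33 * X ^ 6 + C 22 * X ^ 5 + C 11 * X ^ 4 + C 11 * X ^ 3 +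
    C 22 * X ^ 2 + C 11 * X ^ 1 + C 11

noncomputable def Zq : ℤ[X] := X ^ 2 + C 3 * X ^ 1 + C 1

noncomputable def ZR : ℤ[X] :=
  C 11 * X ^ 18 + C 21 * X ^ 17 + C 34 * X ^ 16 + C 17 * X ^ 15 + C 12 * X ^ 14 + C 12 * X ^ 13 +
    C 28 * X ^ 12 + C 2 * X ^ 11 + C 10 * X ^ 10 + C 1 * X ^ 9 + C 10 * X ^ 8 + C 2 * X ^ 7 +
    C 28 * X ^ 6 + C 12 * X ^ 5 + C 12 * X ^ 4 + C 17 * X ^ 3 + C 34 * X ^ 2 + C 21 * X ^ 1 + C 11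

noncomputable def ZW : ℤ[X] :=
  C 1 * X ^ 19 + C 2 * X ^ 18 + C 3 * X ^ 17 + C 2 * X ^ 16 + C 1 * X ^ 15 + C 1 * X ^ 14 +
    C 1 * X ^ 13 + C 1 * X ^ 7 + C 1 * X ^ 6 + C 1 * X ^ 5 + C 2 * X ^ 4 + C 3 * X ^ 3 +
    C 2 * X ^ 2 + C 1 * X ^ 1

noncomputable def ZU : ℤ[X] :=
  C 11 * X ^ 16 + C 31 * X ^ 15 + C 16 * X ^ 14 + C 24 * X ^ 13 + C 10 * X ^ 12 + C 1 * X ^ 11 +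
    C 15 * X ^ 10 + C 42 * X ^ 9 + C 41 * X ^ 8 + C 8 * X ^ 7 + C 31 * X ^ 6 + C 30 * X ^ 5 +
    C 36 * X ^ 4 + C 3 * X ^ 3 + C 10 * X ^ 2 + C 27 * X ^ 1 + C 29

noncomputable def ZV : ℤ[X] := C 36 * X ^ 1 + C 25

noncomputable def ZW2 : ℤ[X] :=
  C 1 * X ^ 17 + C 2 * X ^ 16 + C 2 * X ^ 15 + C 2 * X ^ 14 + C 1 * X ^ 13 + C 2 * X ^ 11 +
    C 4 * X ^ 10 + C 4 * X ^ 9 + C 2 * X ^ 8 + C 3 * X ^ 7 + C 3 * X ^ 6 + C 3 * X ^ 5 +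
    C 1 * X ^ 4 + C 1 * X ^ 3 + C 2 * X ^ 2 + C 3 * X ^ 1 + C 1

lemma hZ1 : Zq * ZR = Qz + C 43 * ZW := by
  unfold Zq ZR Qz ZW
  simp only [map_ofNat, C_1]
  ring

lemma hZ2 : Zq * ZU + ZV = ZR + C 43 * ZW2 := by
  unfold Zq ZU ZV ZR ZW2
  simp only [map_ofNat, C_1]
  ring

/- ### basic facts about `Qz` -/

lemma Qz_natDegree : Qz.natDegree = 20 := by unfold Qz; compute_degree!

lemma Qz_coeff0 : Qz.coeff 0 = 11 := by simp [Qz, coeff_X_pow, coeff_X, coeff_one]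

lemma Qz_coeff10 : Qz.coeff 10 = 23 := by simp [Qz, coeff_X_pow, coeff_X, coeff_one]

lemma Qz_coeff20 : Qz.coeff 20 = 11 := by simp [Qz, coeff_X_pow, coeff_X, coeff_one]

lemma Qz_ne_zero : Qz ≠ 0 := fun h => by simpa [h] using Qz_coeff0

lemma Qz_leadingCoeff : Qz.leadingCoeff = 11 := by
  rw [leadingCoeff, Qz_natDegree, Qz_coeff20]

lemma Qz_primitive : Qz.IsPrimitive := by
  intro r hr
  have h0 : r ∣ 11 := by simpa [Qz_coeff0] using (C_dvd_iff_dvd_coeff r Qz).mp hr 0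
  have h10 : r ∣ 23 := by simpa [Qz_coeff10] using (C_dvd_iff_dvd_coeff r Qz).mp hr 10
  have h1 : r ∣ 1 := by
    have : r ∣ (23 - 2 * 11 : ℤ) := dvd_sub h10 (Dvd.dvd.mul_left h0 2)
    norm_num at this
    exact this
  exact isUnit_of_dvd_one h1

/- ### reflect helpers -/

lemma reflect_reflect {R : Type*} [Semiring R] (N : ℕ) (p : R[X]) :
    reflect N (reflect N p) = p := by
  ext i
  rw [coeff_reflect, coeff_reflect, revAt_invol]

lemma natDegree_reflect_le {R : Type*} [Semiring R] {N : ℕ} {p : R[X]}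
    (h : p.natDegree ≤ N) : (reflect N p).natDegree ≤ N := by
  rw [natDegree_le_iff_coeff_eq_zero]
  intro M hM
  rw [coeff_reflect]
  rw [revAt_eq_self_of_lt hM]
  exact coeff_eq_zero_of_natDegree_lt (lt_of_le_of_lt h hM)

lemma Qz_reflect : reflect 20 Qz = Qz := by
  unfold Qz
  repeat rw [reflect_add]
  rw [reflect_C]
  repeat rw [reflect_C_mul_X_pow]
  norm_num [revAt_le]
  ring

/- ### mod 11 reduction -/

lemma Qz_map11 : Qz.map (Int.castRingHom (ZMod 11)) = X ^ 10 := by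
  simp only [Qz, Polynomial.map_add, Polynomial.map_mul, Polynomial.map_pow, map_C, map_X,
    Int.coe_castRingHom]
  have e11 : ((11 : ℤ) : ZMod 11) = 0 := by decide
  have e22 : ((22 : ℤ) : ZMod 11) = 0 := by decide
  have e33 : ((33 : ℤ) : ZMod 11) = 0 := by decide
  have e44 : ((44 : ℤ) : ZMod 11) = 0 := by decide
  have e55 : ((55 : ℤ) : ZMod 11) = 0 := by decide
  have e23 : ((23 : ℤ) : ZMod 11) = 1 := by decide
  rw [e11, e22, e33, e44, e55, e23]
  simp

/- ### mod 43 facts -/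

noncomputable def q43 : (ZMod 43)[X] := X ^ 2 + C 3 * X ^ 1 + C 1

lemma Zq_map43 : Zq.map (Int.castRingHom (ZMod 43)) = q43 := by
  simp only [Zq, q43, Polynomial.map_add, Polynomial.map_mul, Polynomial.map_pow, map_C, map_X]
  norm_num

lemma q43_natDegree : q43.natDegree = 2 := by unfold q43; compute_degree!

lemma q43_ne_zero : q43 ≠ 0 := by
  intro h
  have := q43_natDegree
  rw [h] at this
  simp at this

lemma q43_monic : q43.Monic := by
  rw [Monic, leadingCoeff, q43_natDegree]
  simp [q43, coeff_X_pow, coeff_X, coeff_one]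

lemma q43_coeff0 : q43.coeff 0 = 1 := by simp [q43, coeff_X_pow, coeff_X, coeff_one]

lemma q43_coeff1 : q43.coeff 1 = 3 := by simp [q43, coeff_X_pow, coeff_X, coeff_one]

lemma q43_irreducible : Irreducible q43 := by
  by_contra h
  rw [q43_monic.not_irreducible_iff_exists_add_mul_eq_coeff q43_natDegree] at h
  obtain ⟨c1, c2, h1, h2⟩ := h
  rw [q43_coeff0] at h1
  rw [q43_coeff1] at h2
  revert h1 h2
  revert c1 c2
  decide

lemma q43_prime : Prime q43 := q43_irreducible.prime

lemma q43_reflect : reflect 2 q43 = q43 := by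
  unfold q43
  rw [reflect_add, reflect_add, reflect_monomial, reflect_C_mul_X_pow, reflect_C]
  norm_num [revAt_le]
  ring

lemma Qz_map43 : Qz.map (Int.castRingHom (ZMod 43)) =
    q43 * ZR.map (Int.castRingHom (ZMod 43)) := by
  have h := congrArg (Polynomial.map (Int.castRingHom (ZMod 43))) hZ1
  simp only [Polynomial.map_mul, Polynomial.map_add, map_C, Int.coe_castRingHom] at h
  have e43 : ((43 : ℤ) : ZMod 43) = 0 := by decide
  rw [e43] at h
  simp only [map_zero, C_0, zero_mul, add_zero] at h
  rw [← Zq_map43]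
  exact h.symm

lemma q43_not_dvd_ZR : ¬ q43 ∣ ZR.map (Int.castRingHom (ZMod 43)) := by
  intro hd
  have h := congrArg (Polynomial.map (Int.castRingHom (ZMod 43))) hZ2
  simp only [Polynomial.map_mul, Polynomial.map_add, map_C, Int.coe_castRingHom] at h
  have e43 : ((43 : ℤ) : ZMod 43) = 0 := by decide
  rw [e43] at h
  simp only [map_zero, C_0, zero_mul, add_zero] at h
  rw [Zq_map43] at h
  -- h : q43 * ZU.map + ZV.map = ZR.map
  have hV : ZV.map (Int.castRingHom (ZMod 43)) = C 36 * X ^ 1 + C 25 := by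
    simp only [ZV, Polynomial.map_add, Polynomial.map_mul, Polynomial.map_pow, map_C, map_X]
    norm_num
  have hdV : q43 ∣ ZV.map (Int.castRingHom (ZMod 43)) := by
    have : ZV.map (Int.castRingHom (ZMod 43)) =
        ZR.map (Int.castRingHom (ZMod 43)) - q43 * ZU.map (Int.castRingHom (ZMod 43)) := by
      rw [← h]; ring
    rw [this]
    exact dvd_sub hd (Dvd.intro _ rfl)
  have hVne : ZV.map (Int.castRingHom (ZMod 43)) ≠ 0 := by
    rw [hV]
    intro h0
    have := congrArg (fun p => coeff p 1) h0
    simp [coeff_X_pow] at this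
    exact absurd this (by decide)
  have hdeg : (ZV.map (Int.castRingHom (ZMod 43))).degree < q43.degree := by
    rw [hV]
    have h2 : q43.degree = 2 := by
      rw [degree_eq_natDegree q43_ne_zero, q43_natDegree]; rfl
    rw [h2]
    apply lt_of_le_of_lt (degree_add_le _ _)
    simp only [max_lt_iff]
    constructor
    · apply lt_of_le_of_lt (degree_mul_le _ _)
      have : (C (36 : ZMod 43)).degree ≤ 0 := degree_C_le
      have h1 : ((X : (ZMod 43)[X]) ^ 1).degree ≤ 1 := by
        simpa using degree_X_pow_le (R := ZMod 43) 1
      calc (C (36 : ZMod 43)).degree + ((X : (ZMod 43)[X]) ^ 1).degree ≤ 0 + 1 :=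
            add_le_add ‹_› h1
        _ < 2 := by decide
    · apply lt_of_le_of_lt (degree_C_le)
      decide
  exact hVne (eq_zero_of_dvd_of_degree_lt hdV hdeg)

/- ### the key lemma: factorizations of `Qz` with Eisenstein shape -/

lemma key (A B : ℤ[X]) (h : Qz = A * B)
    (hA : ∀ j, j ≠ 10 → (11 : ℤ) ∣ A.coeff j) (hA10 : ¬ (11 : ℤ) ∣ A.coeff 10)
    (hB : ∀ j, j ≠ 0 → (11 : ℤ) ∣ B.coeff j) : IsUnit B := by
  have hA0 : A ≠ 0 := by rintro rfl; rw [zero_mul] at h; exact Qz_ne_zero h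
  have hB0 : B ≠ 0 := by rintro rfl; rw [mul_zero] at h; exact Qz_ne_zero h
  have hdeg : A.natDegree + B.natDegree = 20 := by
    rw [← natDegree_mul hA0 hB0, ← h, Qz_natDegree]
  by_cases hBdeg : B.natDegree = 0
  · obtain ⟨b, hb⟩ := natDegree_eq_zero.mp hBdeg
    have hbd : C b ∣ Qz := ⟨A, by rw [h, ← hb, mul_comm]⟩
    have hub : IsUnit b := Qz_primitive b hbd
    rw [← hb]; exact hub.map C
  exfalso
  have hlcB : (11 : ℤ) ∣ B.coeff B.natDegree := hB _ hBdeg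
  have hlc : A.coeff A.natDegree * B.coeff B.natDegree = 11 := by
    have h1 : Qz.leadingCoeff = A.leadingCoeff * B.leadingCoeff := by rw [h, leadingCoeff_mul]
    rw [Qz_leadingCoeff] at h1
    exact h1.symm
  have hlcA_nd : ¬ (11 : ℤ) ∣ A.coeff A.natDegree := by
    intro hd
    obtain ⟨a, ha⟩ := hd
    obtain ⟨bb, hbb⟩ := hlcB
    rw [ha, hbb] at hlc
    have hab : (11:ℤ) * (a * bb) = 1 :=
      mul_left_cancel₀ (show (11:ℤ) ≠ 0 by norm_num) (by linear_combination hlc)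
    have h121 : (11 : ℤ) ∣ 1 := ⟨a * bb, hab.symm⟩
    norm_num at h121
  have hAdeg : A.natDegree = 10 := by
    by_contra hne
    exact hlcA_nd (hA _ hne)
  have hBdeg10 : B.natDegree = 10 := by omega
  obtain ⟨bl, hbl⟩ := hlcB
  have hbl1 : A.coeff 10 * bl = 1 := by
    rw [hAdeg, hbl] at hlc
    exact mul_left_cancel₀ (show (11:ℤ) ≠ 0 by norm_num) (by linear_combination hlc)
  have hlcA : A.coeff 10 = 1 ∨ A.coeff 10 = -1 := by
    rcases Int.mul_eq_one_iff_eq_one_or_neg_one.mp hbl1 with ⟨h1, _⟩ | ⟨h1, _⟩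
    · exact Or.inl h1
    · exact Or.inr h1
  have hc0 : A.coeff 0 * B.coeff 0 = 11 := by
    rw [← mul_coeff_zero, ← h, Qz_coeff0]
  obtain ⟨a0, ha0⟩ := hA 0 (by norm_num)
  have ha0' : a0 * B.coeff 0 = 1 := by
    rw [ha0] at hc0
    exact mul_left_cancel₀ (show (11:ℤ) ≠ 0 by norm_num) (by linear_combination hc0)
  have hcase0 : (A.coeff 0 = 11 ∧ B.coeff 0 = 1) ∨ (A.coeff 0 = -11 ∧ B.coeff 0 = -1) := by
    rcases Int.mul_eq_one_iff_eq_one_or_neg_one.mp ha0' with ⟨h1, h2⟩ | ⟨h1, h2⟩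
    · exact Or.inl ⟨by rw [ha0, h1]; ring, h2⟩
    · exact Or.inr ⟨by rw [ha0, h1]; ring, h2⟩
  -- A is irreducible by Eisenstein's criterion at 11
  have hAprim : A.IsPrimitive := by
    intro r hr
    exact Qz_primitive r (hr.trans ⟨B, h⟩)
  have hAirr : Irreducible A := by
    apply irreducible_of_eisenstein_criterion (P := Ideal.span {(11 : ℤ)})
    · rw [Ideal.span_singleton_prime (by norm_num : (11:ℤ) ≠ 0)]
      norm_num
    · rw [leadingCoeff, hAdeg, Ideal.mem_span_singleton]
      exact hA10
    · intro n hn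
      rw [Ideal.mem_span_singleton]
      apply hA
      have hd10 : A.degree = (10 : ℕ) := by rw [degree_eq_natDegree hA0, hAdeg]
      rw [hd10] at hn
      have : n < 10 := by exact_mod_cast hn
      omega
    · rw [degree_eq_natDegree hA0, hAdeg]
      exact_mod_cast Nat.succ_pos 9
    · rw [Ideal.span_singleton_pow, Ideal.mem_span_singleton]
      rcases hcase0 with ⟨h1, _⟩ | ⟨h1, _⟩ <;> rw [h1] <;> decide
    · exact hAprim
  -- move to ℚ[X]
  have hqAirr : Irreducible (A.map (Int.castRingHom ℚ)) :=
    (Polynomial.IsPrimitive.Int.irreducible_iff_irreducible_map_cast hAprim).mp hAirr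
  have hqAprime : Prime (A.map (Int.castRingHom ℚ)) := hqAirr.prime
  have hrefl : reflect 10 A * reflect 10 B = Qz := by
    have h1 := reflect_mul A B (F := 10) (G := 10) hAdeg.le hBdeg10.le
    norm_num at h1
    rw [← h1, ← h, Qz_reflect]
  have hdvd : A.map (Int.castRingHom ℚ) ∣
      (reflect 10 A).map (Int.castRingHom ℚ) * (reflect 10 B).map (Int.castRingHom ℚ) := by
    rw [← Polynomial.map_mul, hrefl]
    exact ⟨B.map (Int.castRingHom ℚ), by rw [← Polynomial.map_mul, ← h]⟩
  have hinj : Function.Injective ⇑(Int.castRingHom ℚ) := Int.cast_injective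
  have hAq_deg : (A.map (Int.castRingHom ℚ)).natDegree = 10 := by
    rw [natDegree_map_eq_of_injective hinj, hAdeg]
  have hAq_ne : A.map (Int.castRingHom ℚ) ≠ 0 := by
    rw [Polynomial.map_ne_zero_iff hinj]
    exact hA0
  rcases hqAprime.2.2 _ _ hdvd with hca | hcb
  · -- case A ∼ its own reflection : contradiction on coefficients
    obtain ⟨t, ht⟩ := hca
    have hRA0 : (reflect 10 A).map (Int.castRingHom ℚ) ≠ 0 := by
      rw [Polynomial.map_ne_zero_iff hinj, Ne, reflect_eq_zero_iff]
      exact hA0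
    have ht0 : t ≠ 0 := by rintro rfl; rw [mul_zero] at ht; exact hRA0 ht
    have htdeg : t.natDegree = 0 := by
      have h1 : ((reflect 10 A).map (Int.castRingHom ℚ)).natDegree ≤ 10 :=
        le_trans natDegree_map_le (natDegree_reflect_le hAdeg.le)
      have h2 : ((reflect 10 A).map (Int.castRingHom ℚ)).natDegree =
          (A.map (Int.castRingHom ℚ)).natDegree + t.natDegree := by
        rw [ht, natDegree_mul hAq_ne ht0]
      omega
    obtain ⟨r, hr⟩ := natDegree_eq_zero.mp htdeg
    have e0 : ((A.coeff 10 : ℚ)) = (A.coeff 0 : ℚ) * r := by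
      have h1 := congrArg (fun p => coeff p 0) ht
      simpa [coeff_map, coeff_reflect, ← hr, coeff_mul_C,
        (by decide : revAt 10 0 = 10)] using h1
    have e10 : ((A.coeff 0 : ℚ)) = (A.coeff 10 : ℚ) * r := by
      have h1 := congrArg (fun p => coeff p 10) ht
      simpa [coeff_map, coeff_reflect, ← hr, coeff_mul_C,
        (by decide : revAt 10 10 = 0)] using h1
    rcases hlcA with h1 | h1 <;> rcases hcase0 with ⟨h2, _⟩ | ⟨h2, _⟩ <;>
      rw [h1, h2] at e0 e10 <;> push_cast at e0 e10 <;> linarith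
  · -- case A ∼ reflection of B : contradiction mod 43
    obtain ⟨t, ht⟩ := hcb
    have hRB0 : (reflect 10 B).map (Int.castRingHom ℚ) ≠ 0 := by
      rw [Polynomial.map_ne_zero_iff hinj, Ne, reflect_eq_zero_iff]
      exact hB0
    have ht0 : t ≠ 0 := by rintro rfl; rw [mul_zero] at ht; exact hRB0 ht
    have htdeg : t.natDegree = 0 := by
      have h1 : ((reflect 10 B).map (Int.castRingHom ℚ)).natDegree ≤ 10 :=
        le_trans natDegree_map_le (natDegree_reflect_le hBdeg10.le)
      have h2 : ((reflect 10 B).map (Int.castRingHom ℚ)).natDegree =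
          (A.map (Int.castRingHom ℚ)).natDegree + t.natDegree := by
        rw [ht, natDegree_mul hAq_ne ht0]
      omega
    obtain ⟨r, hr⟩ := natDegree_eq_zero.mp htdeg
    have e10 : ((B.coeff 0 : ℚ)) = (A.coeff 10 : ℚ) * r := by
      have h1 := congrArg (fun p => coeff p 10) ht
      simpa [coeff_map, coeff_reflect, ← hr, coeff_mul_C,
        (by decide : revAt 10 10 = 0)] using h1
    have hr1 : r = 1 ∨ r = -1 := by
      rcases hlcA with h1 | h1 <;> rcases hcase0 with ⟨_, h2⟩ | ⟨_, h2⟩ <;>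
        rw [h1, h2] at e10 <;> push_cast at e10
      · left; linarith
      · right; linarith
      · right; linarith
      · left; linarith
    obtain ⟨ε, hε1, hεr⟩ : ∃ ε : ℤ, (ε = 1 ∨ ε = -1) ∧ ((ε : ℚ) = r) := by
      rcases hr1 with h1 | h1
      · exact ⟨1, Or.inl rfl, by rw [h1]; norm_num⟩
      · exact ⟨-1, Or.inr rfl, by rw [h1]; norm_num⟩
    have hRB : reflect 10 B = A * C ε := by
      apply Polynomial.map_injective (Int.castRingHom ℚ) hinj
      rw [ht, ← hr, Polynomial.map_mul, map_C]
      congr 1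
      rw [eq_intCast, hεr]
    have hee : C ε * C ε = (1 : ℤ[X]) := by
      rw [← C_mul]
      rcases hε1 with rfl | rfl <;> norm_num
    have hAeq : A = reflect 10 B * C ε := by
      rw [hRB, mul_assoc, hee, mul_one]
    -- now reduce modulo 43
    have hee43 : C ((ε : ZMod 43)) * C ((ε : ZMod 43)) = (1 : (ZMod 43)[X]) := by
      rw [← C_mul]
      rcases hε1 with rfl | rfl <;> norm_num
    have hQg : Qz.map (Int.castRingHom (ZMod 43)) =
        reflect 10 (B.map (Int.castRingHom (ZMod 43))) * B.map (Int.castRingHom (ZMod 43)) *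
          C ((ε : ZMod 43)) := by
      rw [h, hAeq, Polynomial.map_mul, Polynomial.map_mul, map_C, ← reflect_map, eq_intCast]
      ring
    have hbc : (B.map (Int.castRingHom (ZMod 43))).coeff 0 ≠ 0 := by
      rw [coeff_map, eq_intCast]
      rcases hcase0 with ⟨_, h2⟩ | ⟨_, h2⟩ <;> rw [h2] <;> decide
    have hb0ne : B.map (Int.castRingHom (ZMod 43)) ≠ 0 := by
      intro h0
      rw [h0, coeff_zero] at hbc
      exact hbc rfl
    have hεu : IsUnit (C ((ε : ZMod 43)) : (ZMod 43)[X]) := by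
      apply isUnit_C.mpr
      rcases hε1 with rfl | rfl
      · simp
      · rw [show (((-1 : ℤ) : ZMod 43)) = -1 by push_cast; ring]
        exact isUnit_one.neg
    have hqQdvd : q43 ∣ reflect 10 (B.map (Int.castRingHom (ZMod 43))) *
        B.map (Int.castRingHom (ZMod 43)) := by
      have h1 : q43 ∣ Qz.map (Int.castRingHom (ZMod 43)) :=
        ⟨ZR.map (Int.castRingHom (ZMod 43)), Qz_map43⟩
      rw [hQg] at h1
      rcases q43_prime.2.2 _ _ h1 with h2 | h2
      · exact h2
      · exact absurd (isUnit_of_dvd_unit h2 hεu) q43_prime.not_unit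
    have hbdeg43 : (B.map (Int.castRingHom (ZMod 43))).natDegree ≤ 10 :=
      le_trans natDegree_map_le hBdeg10.le
    have step : ∀ c : (ZMod 43)[X], c ≠ 0 → c.natDegree ≤ 10 → q43 ∣ c →
        q43 ∣ reflect 10 c := by
      rintro c hcne hcd ⟨u, hu⟩
      have hu0 : u ≠ 0 := by rintro rfl; rw [mul_zero] at hu; exact hcne hu
      have hud : u.natDegree ≤ 8 := by
        have h1 := natDegree_mul q43_ne_zero hu0
        rw [← hu, q43_natDegree] at h1
        omega
      have h2 : reflect 10 c = q43 * reflect 8 u := by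
        rw [hu]
        have h3 := reflect_mul q43 u (F := 2) (G := 8) q43_natDegree.le hud
        norm_num at h3
        rw [h3, q43_reflect]
      exact ⟨_, h2⟩
    have hqb : q43 ∣ B.map (Int.castRingHom (ZMod 43)) := by
      rcases q43_prime.2.2 _ _ hqQdvd with h2 | h2
      · have h3 := step (reflect 10 (B.map (Int.castRingHom (ZMod 43))))
          (by rw [Ne, reflect_eq_zero_iff]; exact hb0ne)
          (natDegree_reflect_le hbdeg43) h2
        rwa [_root_.reflect_reflect] at h3
      · exact h2
    have hqrb : q43 ∣ reflect 10 (B.map (Int.castRingHom (ZMod 43))) :=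
      step _ hb0ne hbdeg43 hqb
    have hq2 : q43 * q43 ∣ reflect 10 (B.map (Int.castRingHom (ZMod 43))) *
        B.map (Int.castRingHom (ZMod 43)) := mul_dvd_mul hqrb hqb
    have h5 : reflect 10 (B.map (Int.castRingHom (ZMod 43))) *
        B.map (Int.castRingHom (ZMod 43)) =
        q43 * (ZR.map (Int.castRingHom (ZMod 43)) * C ((ε : ZMod 43))) := by
      have h6 : reflect 10 (B.map (Int.castRingHom (ZMod 43))) *
          B.map (Int.castRingHom (ZMod 43)) =
          Qz.map (Int.castRingHom (ZMod 43)) * C ((ε : ZMod 43)) := by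
        rw [hQg, mul_assoc, hee43, mul_one]
      rw [h6, Qz_map43, mul_assoc]
    rw [h5] at hq2
    have h7 : q43 ∣ ZR.map (Int.castRingHom (ZMod 43)) * C ((ε : ZMod 43)) :=
      (mul_dvd_mul_iff_left q43_ne_zero).mp hq2
    have h8 : q43 ∣ ZR.map (Int.castRingHom (ZMod 43)) := by
      have h9 : ZR.map (Int.castRingHom (ZMod 43)) =
          ZR.map (Int.castRingHom (ZMod 43)) * C ((ε : ZMod 43)) * C ((ε : ZMod 43)) := by
        rw [mul_assoc, hee43, mul_one]
      rw [h9]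
      exact h7.mul_right _
    exact q43_not_dvd_ZR h8

lemma Qz_irreducible : Irreducible Qz := by
  constructor
  · intro hu
    have h1 := natDegree_eq_zero_of_isUnit hu
    rw [Qz_natDegree] at h1
    exact absurd h1 (by norm_num)
  intro A B h
  have h11 : A.map (Int.castRingHom (ZMod 11)) * B.map (Int.castRingHom (ZMod 11)) = X ^ 10 := by
    rw [← Polynomial.map_mul, ← h, Qz_map11]
  have hX0 : (X : (ZMod 11)[X]) ^ 10 ≠ 0 := pow_ne_zero _ X_ne_zero
  have hA0 : A.map (Int.castRingHom (ZMod 11)) ≠ 0 := fun h0 => hX0 (by rw [← h11, h0, zero_mul])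
  have hB0 : B.map (Int.castRingHom (ZMod 11)) ≠ 0 := fun h0 => hX0 (by rw [← h11, h0, mul_zero])
  have anal : ∀ (p : ℤ[X]) (k : ℕ), Associated (p.map (Int.castRingHom (ZMod 11))) (X ^ k) →
      (∀ j, j ≠ k → (11:ℤ) ∣ p.coeff j) ∧ ¬ (11:ℤ) ∣ p.coeff k ∧
        (p.map (Int.castRingHom (ZMod 11))).natDegree = k := by
    rintro p k ⟨u, hu⟩
    have hXk : ((X : (ZMod 11)[X]) ^ k) ≠ 0 := pow_ne_zero _ X_ne_zero
    have hp0 : p.map (Int.castRingHom (ZMod 11)) ≠ 0 := by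
      rintro h0; rw [h0, zero_mul] at hu; exact hXk hu.symm
    have hudeg : (↑u : (ZMod 11)[X]).natDegree = 0 := natDegree_eq_zero_of_isUnit u.isUnit
    obtain ⟨c, hc⟩ := natDegree_eq_zero.mp hudeg
    have hc0 : c ≠ 0 := by
      rintro rfl
      exact u.ne_zero (by rw [← hc, C_0])
    have hcoef : ∀ j, (p.map (Int.castRingHom (ZMod 11))).coeff j * c =
        ((X : (ZMod 11)[X]) ^ k).coeff j := by
      intro j
      rw [← coeff_mul_C, hc, hu]
    have hdvd : ∀ j, j ≠ k → (11:ℤ) ∣ p.coeff j := by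
      intro j hj
      have h1 := hcoef j
      rw [coeff_X_pow, if_neg hj] at h1
      have h2 : (p.map (Int.castRingHom (ZMod 11))).coeff j = 0 := by
        rcases mul_eq_zero.mp h1 with h2 | h2
        · exact h2
        · exact absurd h2 hc0
      rw [coeff_map, eq_intCast] at h2
      have h3 := (ZMod.intCast_zmod_eq_zero_iff_dvd _ 11).mp h2
      exact_mod_cast h3
    have hndvd : ¬ (11:ℤ) ∣ p.coeff k := by
      intro hd
      have h1 := hcoef k
      rw [coeff_X_pow, if_pos rfl] at h1
      have h2 : (p.map (Int.castRingHom (ZMod 11))).coeff k = 0 := by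
        rw [coeff_map, eq_intCast]
        exact (ZMod.intCast_zmod_eq_zero_iff_dvd _ 11).mpr (by exact_mod_cast hd)
      rw [h2, zero_mul] at h1
      exact one_ne_zero h1.symm
    refine ⟨hdvd, hndvd, ?_⟩
    have h1 : (p.map (Int.castRingHom (ZMod 11))).natDegree + (↑u : (ZMod 11)[X]).natDegree = k := by
      rw [← natDegree_mul hp0 u.ne_zero, hu, natDegree_X_pow]
    omega
  obtain ⟨k, hk10, hkassoc⟩ := (dvd_prime_pow prime_X 10).mp
    (⟨B.map (Int.castRingHom (ZMod 11)), h11.symm⟩ :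
      A.map (Int.castRingHom (ZMod 11)) ∣ (X : (ZMod 11)[X]) ^ 10)
  obtain ⟨l, hl10, hlassoc⟩ := (dvd_prime_pow prime_X 10).mp
    (⟨A.map (Int.castRingHom (ZMod 11)), by rw [← h11]; ring⟩ :
      B.map (Int.castRingHom (ZMod 11)) ∣ (X : (ZMod 11)[X]) ^ 10)
  obtain ⟨hApat, hAk, hAdeg'⟩ := anal A k hkassoc
  obtain ⟨hBpat, hBl, hBdeg'⟩ := anal B l hlassoc
  have hkl : k + l = 10 := by
    have h1 : (A.map (Int.castRingHom (ZMod 11))).natDegree +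
        (B.map (Int.castRingHom (ZMod 11))).natDegree = 10 := by
      rw [← natDegree_mul hA0 hB0, h11, natDegree_X_pow]
    omega
  rcases Nat.eq_zero_or_pos k with hk0 | hkpos
  · -- k = 0, l = 10 : B is the Eisenstein part
    have hl : l = 10 := by omega
    subst hk0; subst hl
    exact Or.inl (key B A (by rw [h, mul_comm]) hBpat hBl hApat)
  rcases Nat.lt_or_ge k 10 with hklt | hkge
  · -- 0 < k < 10 : impossible
    exfalso
    have hdA0 : (11:ℤ) ∣ A.coeff 0 := hApat 0 (by omega)
    have hdB0 : (11:ℤ) ∣ B.coeff 0 := hBpat 0 (by omega)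
    have hc0 : A.coeff 0 * B.coeff 0 = 11 := by
      rw [← mul_coeff_zero, ← h, Qz_coeff0]
    obtain ⟨a, ha⟩ := hdA0
    obtain ⟨bb, hbb⟩ := hdB0
    rw [ha, hbb] at hc0
    have hab : (11:ℤ) * (a * bb) = 1 :=
      mul_left_cancel₀ (show (11:ℤ) ≠ 0 by norm_num) (by linear_combination hc0)
    have h1 : (11 : ℤ) ∣ 1 := ⟨a * bb, hab.symm⟩
    norm_num at h1
  · -- k = 10, l = 0 : A is the Eisenstein part
    have hk : k = 10 := by omega
    have hl : l = 0 := by omega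
    subst hk; subst hl
    exact Or.inr (key A B h hApat hAk hBpat)

/- ### transfer to `P₁` -/

lemma map_Qz_Q : Qz.map (Int.castRingHom ℚ) = C 11 * P₁ := by
  have h23 : (11 : ℚ[X]) * C (23 / 11 : ℚ) = 23 := by
    have h1 : (C (11:ℚ)) * C (23 / 11 : ℚ) = C 23 := by rw [← C_mul]; norm_num
    simpa only [map_ofNat] using h1
  simp only [Qz, P₁, Polynomial.map_add, Polynomial.map_mul, Polynomial.map_pow, map_C, map_X,
    Int.coe_castRingHom]
  push_cast
  simp only [map_ofNat, C_1]
  linear_combination (-(X : ℚ[X]) ^ 10) * h23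

lemma P1_irreducible : Irreducible P₁ := by
  have h := (Polynomial.IsPrimitive.Int.irreducible_iff_irreducible_map_cast Qz_primitive).mp Qz_irreducible
  rw [map_Qz_Q] at h
  have hu : IsUnit (C (11:ℚ)) := isUnit_C.mpr (by norm_num)
  obtain ⟨v, hv⟩ := hu
  have hassoc : Associated P₁ (C 11 * P₁) := ⟨v, by rw [hv, mul_comm]⟩
  exact hassoc.symm.irreducible h

lemma P1_coeff10 : P₁.coeff 10 = 23 / 11 := by
  have h := congrArg (fun p => coeff p 10) map_Qz_Q
  simp only [coeff_map, coeff_C_mul, Qz_coeff10, Int.coe_castRingHom] at h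
  push_cast at h
  linarith

lemma P1_natDegree_le : P₁.natDegree ≤ 20 := by unfold P₁; compute_degree

lemma P1_coeff20 : P₁.coeff 20 = 1 := by
  have h := congrArg (fun p => coeff p 20) map_Qz_Q
  simp only [coeff_map, coeff_C_mul, Qz_coeff20, Int.coe_castRingHom] at h
  push_cast at h
  linarith

lemma P1_monic : P₁.Monic :=
  monic_of_natDegree_le_of_coeff_eq_one 20 P1_natDegree_le P1_coeff20

/-- `P₁` is irreducible over `ℚ`, and no complex root of unity is a root of `P₁`. -/
theorem stmt14 :
    Irreducible P₁ ∧ ∀ z : ℂ, (∃ n : ℕ, 1 ≤ n ∧ z ^ n = 1) → aeval z P₁ ≠ 0 := by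
  refine ⟨P1_irreducible, ?_⟩
  rintro z ⟨n, hn1, hzn⟩ hz0
  have hint : IsIntegral ℤ z := by
    refine ⟨X ^ n - C 1, monic_X_pow_sub_C 1 (by omega), ?_⟩
    simp [hzn]
  have hmin : P₁ = minpoly ℚ z := minpoly.eq_of_irreducible_of_monic P1_irreducible hz0 P1_monic
  have h2 : minpoly ℚ z = (minpoly ℤ z).map (algebraMap ℤ ℚ) :=
    minpoly.isIntegrallyClosed_eq_field_fractions ℚ ℂ hint
  have h3 : (23 / 11 : ℚ) = (((minpoly ℤ z).coeff 10 : ℤ) : ℚ) := by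
    rw [← P1_coeff10, hmin, h2, coeff_map]
    simp [algebraMap_int_eq]
  have h4 : (11 : ℤ) * (minpoly ℤ z).coeff 10 = 23 := by
    have : (11 : ℚ) * (((minpoly ℤ z).coeff 10 : ℤ) : ℚ) = 23 := by
      rw [← h3]; norm_num
    exact_mod_cast this
  omega
end
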